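/- For all real numbers u > 0 and δ > 0, the difference between the sum ∑_{n ∈ ℤ, 0 < n ≤ 1/(δu²)} F1(u, nδ) and the quantity F2(u)/δ has absolute value at most 6/√u. -/

import Mathlib

open MeasureTheory

noncomputable section

/-- `F₁(u,v)` is the Lebesgue measure of
`{t : 0 < |t(ut+v²)| ≤ 1, |uvt| ≤ 1, |uvt+v³| ≤ 1, |u²t| ≤ 1, |u²t+uv²| ≤ 1}`. -/
def F1 (u v : ℝ) : ℝ :=
  (volume {t : ℝ |
    0 < |t * (u * t + v ^ 2)| ∧ |t * (u * t + v ^ 2)| ≤ 1 ∧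
    |u * v * t| ≤ 1 ∧ |u * v * t + v ^ 3| ≤ 1 ∧
    |u ^ 2 * t| ≤ 1 ∧ |u ^ 2 * t + u * v ^ 2| ≤ 1}).toReal

/-- `F₂(u) = ∫_0^{1/u²} F₁(u,v) dv`. -/
def F2 (u : ℝ) : ℝ := ∫ v in (0:ℝ)..(1 / u ^ 2), F1 u v

lemma rs_integrable (f : ℝ → ℝ) (M : ℝ) (hm : Measurable f) (h0 : ∀ v, 0 ≤ f v)
    (hM : ∀ v, f v ≤ M) (a b : ℝ) : IntervalIntegrable f volume a b := by
  constructor <;>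
  · apply Measure.integrableOn_of_bounded (M := M)
    · exact ((measure_Ioc_lt_top).ne)
    · exact hm.aestronglyMeasurable
    · filter_upwards with x
      rw [Real.norm_eq_abs, abs_of_nonneg (h0 x)]
      exact hM x

lemma rs_cell_up (f : ℝ → ℝ) (M : ℝ) (hm : Measurable f) (h0 : ∀ v, 0 ≤ f v)
    (hM : ∀ v, f v ≤ M) {a b C : ℝ} (hab : a ≤ b)
    (hC : ∀ t ∈ Set.Ioc a b, f t ≤ C) :
    ∫ t in a..b, f t ≤ (b - a) * C := by
  rw [intervalIntegral.integral_of_le hab]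
  have h1 : ∫ t in Set.Ioc a b, f t ≤ ∫ _ in Set.Ioc a b, C := by
    apply setIntegral_mono_on
    · exact (intervalIntegrable_iff_integrableOn_Ioc_of_le hab).1
        (rs_integrable f M hm h0 hM a b)
    · exact integrableOn_const (by simp)
    · exact measurableSet_Ioc
    · exact hC
  calc ∫ t in Set.Ioc a b, f t ≤ ∫ _ in Set.Ioc a b, C := h1
    _ = (b - a) * C := by
        rw [setIntegral_const, measureReal_def, Real.volume_Ioc, smul_eq_mul,
          ENNReal.toReal_ofReal (by linarith)]

lemma rs_cell_lo (f : ℝ → ℝ) (M : ℝ) (hm : Measurable f) (h0 : ∀ v, 0 ≤ f v)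
    (hM : ∀ v, f v ≤ M) {a b C : ℝ} (hab : a ≤ b)
    (hC : ∀ t ∈ Set.Ioc a b, C ≤ f t) :
    (b - a) * C ≤ ∫ t in a..b, f t := by
  rw [intervalIntegral.integral_of_le hab]
  have h1 : ∫ _ in Set.Ioc a b, C ≤ ∫ t in Set.Ioc a b, f t := by
    apply setIntegral_mono_on
    · exact integrableOn_const (by simp)
    · exact (intervalIntegrable_iff_integrableOn_Ioc_of_le hab).1
        (rs_integrable f M hm h0 hM a b)
    · exact measurableSet_Ioc
    · exact hC
  calc (b - a) * C = ∫ _ in Set.Ioc a b, C := by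
        rw [setIntegral_const, measureReal_def, Real.volume_Ioc, smul_eq_mul,
          ENNReal.toReal_ofReal (by linarith)]
    _ ≤ _ := h1


section chains
variable (f : ℝ → ℝ) (M δ p : ℝ) (hδ : 0 < δ)
  (hm : Measurable f) (h0 : ∀ v, 0 ≤ f v) (hM : ∀ v, f v ≤ M)

include hδ hm h0 hM

section
variable (hmono : MonotoneOn f (Set.Ioc 0 p))
include hmono

lemma rs_chainA : ∀ j : ℕ, (((1+j : ℕ) : ℝ) * δ ≤ p) →
    δ * ∑ n ∈ Finset.Ico 1 (1+j), f (n * δ) ≤ ∫ t in δ..(((1+j : ℕ) : ℝ) * δ), f t := by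
  intro j
  induction j with
  | zero => intro _; simp
  | succ j ih =>
    rw [show 1 + (j+1) = (1+j) + 1 by omega]
    set k := 1 + j with hk
    intro hp
    have hd : (((k+1) : ℕ) : ℝ) * δ = ((k : ℕ) : ℝ) * δ + δ := by push_cast; ring
    have hle : ((k : ℕ) : ℝ) * δ ≤ (((k+1) : ℕ) : ℝ) * δ := by rw [hd]; linarith
    have hkpos : (0:ℝ) < ((k:ℕ):ℝ) * δ := by
      have : (1:ℝ) ≤ ((k:ℕ):ℝ) := by exact_mod_cast Nat.one_le_iff_ne_zero.2 (by omega)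
      nlinarith
    have hp' : ((k : ℕ) : ℝ) * δ ≤ p := le_trans hle hp
    have hsplit : (∫ t in δ..(((k : ℕ) : ℝ) * δ), f t)
        + ∫ t in (((k : ℕ) : ℝ) * δ)..(((k+1 : ℕ) : ℝ) * δ), f t
        = ∫ t in δ..(((k+1 : ℕ) : ℝ) * δ), f t :=
      intervalIntegral.integral_add_adjacent_intervals
        (rs_integrable f M hm h0 hM _ _) (rs_integrable f M hm h0 hM _ _)
    have hcell : δ * f (((k : ℕ) : ℝ) * δ)
        ≤ ∫ t in (((k : ℕ) : ℝ) * δ)..(((k+1 : ℕ) : ℝ) * δ), f t := by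
      have h := rs_cell_lo f M hm h0 hM (a := ((k : ℕ) : ℝ) * δ)
        (b := ((k+1 : ℕ) : ℝ) * δ) (C := f (((k : ℕ) : ℝ) * δ)) hle ?_
      · rw [show ((k+1 : ℕ) : ℝ) * δ - ((k : ℕ) : ℝ) * δ = δ by push_cast; ring] at h
        linarith
      · intro t ht
        simp only [Set.mem_Ioc] at ht
        refine hmono ⟨hkpos, hp'⟩ ⟨lt_trans hkpos ht.1, le_trans ht.2 (by rw [hd] at hp; linarith [hp])⟩ (le_of_lt ht.1)
    rw [Finset.sum_Ico_succ_top (by omega), mul_add]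
    have IH := ih (by rw [hd] at hp; exact hp')
    linarith

lemma rs_chainC : ∀ j : ℕ, (((j:ℕ) : ℝ) * δ ≤ p) →
    (∫ t in (0:ℝ)..(((j:ℕ) : ℝ) * δ), f t) ≤ δ * ∑ n ∈ Finset.Icc 1 j, f (n * δ) := by
  intro j
  induction j with
  | zero => intro _; simp
  | succ j ih =>
    intro hp
    have hd : (((j+1) : ℕ) : ℝ) * δ = ((j : ℕ) : ℝ) * δ + δ := by push_cast; ring
    have hle : ((j : ℕ) : ℝ) * δ ≤ (((j+1) : ℕ) : ℝ) * δ := by rw [hd]; linarith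
    have hjnn : (0:ℝ) ≤ ((j:ℕ):ℝ) * δ := by positivity
    have hp' : ((j : ℕ) : ℝ) * δ ≤ p := le_trans hle hp
    have hsplit : (∫ t in (0:ℝ)..(((j : ℕ) : ℝ) * δ), f t)
        + ∫ t in (((j : ℕ) : ℝ) * δ)..(((j+1 : ℕ) : ℝ) * δ), f t
        = ∫ t in (0:ℝ)..(((j+1 : ℕ) : ℝ) * δ), f t :=
      intervalIntegral.integral_add_adjacent_intervals
        (rs_integrable f M hm h0 hM _ _) (rs_integrable f M hm h0 hM _ _)
    have hcell : (∫ t in (((j : ℕ) : ℝ) * δ)..(((j+1 : ℕ) : ℝ) * δ), f t)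
        ≤ δ * f (((j+1 : ℕ) : ℝ) * δ) := by
      have h := rs_cell_up f M hm h0 hM (a := ((j : ℕ) : ℝ) * δ)
        (b := ((j+1 : ℕ) : ℝ) * δ) (C := f (((j+1 : ℕ) : ℝ) * δ)) hle ?_
      · rw [show ((j+1 : ℕ) : ℝ) * δ - ((j : ℕ) : ℝ) * δ = δ by push_cast; ring] at h
        linarith
      · intro t ht
        simp only [Set.mem_Ioc] at ht
        exact hmono ⟨lt_of_le_of_lt hjnn ht.1, le_trans ht.2 hp⟩
          ⟨by positivity, hp⟩ ht.2
    rw [Finset.sum_Icc_succ_top (by omega), mul_add]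
    have IH := ih hp'
    linarith
end

section
variable (hanti : AntitoneOn f (Set.Ici p ∩ Set.Ioi 0))
include hanti

lemma rs_chainB (c : ℕ) (hc : 0 < c) (hcp : p ≤ (c : ℝ) * δ) :
    ∀ j : ℕ, δ * ∑ n ∈ Finset.Ioc c (c+j), f (n * δ)
      ≤ ∫ t in ((c:ℝ) * δ)..(((c+j : ℕ) : ℝ) * δ), f t := by
  intro j
  induction j with
  | zero => simp
  | succ j ih =>
    rw [show c + (j+1) = (c+j) + 1 by omega]
    set k := c + j with hk
    have hck : (c:ℝ) * δ ≤ ((k:ℕ):ℝ) * δ := by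
      have : (c:ℝ) ≤ ((k:ℕ):ℝ) := by exact_mod_cast (by omega : c ≤ k)
      nlinarith
    have hd : (((k+1) : ℕ) : ℝ) * δ = ((k : ℕ) : ℝ) * δ + δ := by push_cast; ring
    have hle : ((k : ℕ) : ℝ) * δ ≤ (((k+1) : ℕ) : ℝ) * δ := by rw [hd]; linarith
    have hkpos : (0:ℝ) < ((k:ℕ):ℝ) * δ := by
      have h1 : (0:ℝ) < (c:ℝ) * δ := by
        have : (0:ℝ) < (c:ℝ) := by exact_mod_cast hc
        positivity
      linarith
    have hpk : p ≤ ((k:ℕ):ℝ) * δ := le_trans hcp hck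
    have hsplit : (∫ t in ((c:ℝ) * δ)..(((k : ℕ) : ℝ) * δ), f t)
        + ∫ t in (((k : ℕ) : ℝ) * δ)..(((k+1 : ℕ) : ℝ) * δ), f t
        = ∫ t in ((c:ℝ) * δ)..(((k+1 : ℕ) : ℝ) * δ), f t :=
      intervalIntegral.integral_add_adjacent_intervals
        (rs_integrable f M hm h0 hM _ _) (rs_integrable f M hm h0 hM _ _)
    have hcell : δ * f (((k+1 : ℕ) : ℝ) * δ)
        ≤ ∫ t in (((k : ℕ) : ℝ) * δ)..(((k+1 : ℕ) : ℝ) * δ), f t := by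
      have h := rs_cell_lo f M hm h0 hM (a := ((k : ℕ) : ℝ) * δ)
        (b := ((k+1 : ℕ) : ℝ) * δ) (C := f (((k+1 : ℕ) : ℝ) * δ)) hle ?_
      · rw [show ((k+1 : ℕ) : ℝ) * δ - ((k : ℕ) : ℝ) * δ = δ by push_cast; ring] at h
        linarith
      · intro t ht
        simp only [Set.mem_Ioc] at ht
        refine hanti ⟨?_, ?_⟩ ⟨?_, ?_⟩ ht.2
        · exact le_trans hpk (le_of_lt ht.1)
        · exact Set.mem_Ioi.2 (lt_trans hkpos ht.1)
        · exact le_trans hpk hle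
        · exact Set.mem_Ioi.2 (by rw [hd]; linarith)
    rw [Finset.sum_Ioc_succ_top (by omega), mul_add]
    linarith

lemma rs_chainD (c : ℕ) (hc : 0 < c) (hcp : p ≤ (c : ℝ) * δ) :
    ∀ j : ℕ, (∫ t in ((c:ℝ) * δ)..(((c+j : ℕ) : ℝ) * δ), f t)
      ≤ δ * ∑ n ∈ Finset.Ico c (c+j), f (n * δ) := by
  intro j
  induction j with
  | zero => simp
  | succ j ih =>
    rw [show c + (j+1) = (c+j) + 1 by omega]
    set k := c + j with hk
    have hck : (c:ℝ) * δ ≤ ((k:ℕ):ℝ) * δ := by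
      have : (c:ℝ) ≤ ((k:ℕ):ℝ) := by exact_mod_cast (by omega : c ≤ k)
      nlinarith
    have hd : (((k+1) : ℕ) : ℝ) * δ = ((k : ℕ) : ℝ) * δ + δ := by push_cast; ring
    have hle : ((k : ℕ) : ℝ) * δ ≤ (((k+1) : ℕ) : ℝ) * δ := by rw [hd]; linarith
    have hkpos : (0:ℝ) < ((k:ℕ):ℝ) * δ := by
      have h1 : (0:ℝ) < (c:ℝ) * δ := by
        have : (0:ℝ) < (c:ℝ) := by exact_mod_cast hc
        positivity
      linarith
    have hpk : p ≤ ((k:ℕ):ℝ) * δ := le_trans hcp hck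
    have hsplit : (∫ t in ((c:ℝ) * δ)..(((k : ℕ) : ℝ) * δ), f t)
        + ∫ t in (((k : ℕ) : ℝ) * δ)..(((k+1 : ℕ) : ℝ) * δ), f t
        = ∫ t in ((c:ℝ) * δ)..(((k+1 : ℕ) : ℝ) * δ), f t :=
      intervalIntegral.integral_add_adjacent_intervals
        (rs_integrable f M hm h0 hM _ _) (rs_integrable f M hm h0 hM _ _)
    have hcell : (∫ t in (((k : ℕ) : ℝ) * δ)..(((k+1 : ℕ) : ℝ) * δ), f t)
        ≤ δ * f (((k : ℕ) : ℝ) * δ) := by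
      have h := rs_cell_up f M hm h0 hM (a := ((k : ℕ) : ℝ) * δ)
        (b := ((k+1 : ℕ) : ℝ) * δ) (C := f (((k : ℕ) : ℝ) * δ)) hle ?_
      · rw [show ((k+1 : ℕ) : ℝ) * δ - ((k : ℕ) : ℝ) * δ = δ by push_cast; ring] at h
        linarith
      · intro t ht
        simp only [Set.mem_Ioc] at ht
        refine hanti ⟨hpk, Set.mem_Ioi.2 hkpos⟩
          ⟨le_trans hpk (le_of_lt ht.1), Set.mem_Ioi.2 (lt_trans hkpos ht.1)⟩ (le_of_lt ht.1)
    rw [Finset.sum_Ico_succ_top (by omega), mul_add]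
    linarith
end
end chains

lemma rs_sum_union_le (A B : Finset ℕ) (g : ℕ → ℝ) (h : ∀ n, 0 ≤ g n) :
    ∑ n ∈ A ∪ B, g n ≤ (∑ n ∈ A, g n) + ∑ n ∈ B, g n := by
  have h1 := Finset.sum_union_inter (s₁ := A) (s₂ := B) (f := g)
  have h2 : 0 ≤ ∑ n ∈ A ∩ B, g n := Finset.sum_nonneg fun n _ => h n
  linarith

set_option maxHeartbeats 1000000 in
lemma rs_estimate (f : ℝ → ℝ) (M L δ p : ℝ) (hδ : 0 < δ) (hL : 0 < L) (hp : 0 ≤ p)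
    (hm : Measurable f) (h0 : ∀ v, 0 ≤ f v) (hM : ∀ v, f v ≤ M)
    (hmono : MonotoneOn f (Set.Ioc 0 p))
    (hanti : AntitoneOn f (Set.Ici p ∩ Set.Ioi 0)) :
    |(∑ n ∈ Finset.Icc 1 ⌊L/δ⌋₊, f (n * δ)) - (∫ v in (0:ℝ)..L, f v)/δ| ≤ 2*M := by
  have hMnn : 0 ≤ M := le_trans (h0 0) (hM 0)
  set N := ⌊L/δ⌋₊ with hN
  set K := min N ⌊p/δ⌋₊ with hK
  have hKN : K ≤ N := min_le_left _ _
  have hNδ : (N:ℝ) * δ ≤ L := by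
    have h1 : (N:ℝ) ≤ L/δ := Nat.floor_le (by positivity)
    calc (N:ℝ) * δ ≤ (L/δ) * δ := by nlinarith
      _ = L := by field_simp
  have hLNδ : L ≤ ((N:ℝ)+1) * δ := by
    have h1 : L/δ < (N:ℝ)+1 := Nat.lt_floor_add_one _
    calc L = (L/δ) * δ := by field_simp
      _ ≤ ((N:ℝ)+1) * δ := by nlinarith
  have hKp : (K:ℝ) * δ ≤ p := by
    have h1 : (K:ℝ) ≤ (⌊p/δ⌋₊ : ℝ) := by exact_mod_cast min_le_right N _
    have h2 : (⌊p/δ⌋₊ : ℝ) ≤ p/δ := Nat.floor_le (by positivity)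
    calc (K:ℝ) * δ ≤ (p/δ) * δ := by nlinarith
      _ = p := by field_simp
  have hIntNL : (∫ t in (0:ℝ)..((N:ℝ)*δ), f t) + (∫ t in ((N:ℝ)*δ)..L, f t)
      = ∫ t in (0:ℝ)..L, f t :=
    intervalIntegral.integral_add_adjacent_intervals
      (rs_integrable f M hm h0 hM _ _) (rs_integrable f M hm h0 hM _ _)
  have hTail_nn : 0 ≤ ∫ t in ((N:ℝ)*δ)..L, f t :=
    intervalIntegral.integral_nonneg hNδ (fun t _ => h0 t)
  have hTail_up : (∫ t in ((N:ℝ)*δ)..L, f t) ≤ δ * M := by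
    have h := rs_cell_up f M hm h0 hM (a := (N:ℝ)*δ) (b := L) hNδ (fun t _ => hM t)
    calc (∫ t in ((N:ℝ)*δ)..L, f t) ≤ (L - (N:ℝ)*δ) * M := h
      _ ≤ δ * M := by nlinarith
  have hInt0N_nn : 0 ≤ ∫ t in (0:ℝ)..((N:ℝ)*δ), f t :=
    intervalIntegral.integral_nonneg (by positivity) (fun t _ => h0 t)
  -- UPPER BOUND: δ * sum ≤ ∫₀ᴸ + 2δM
  have hUpper : δ * (∑ n ∈ Finset.Icc 1 N, f (n * δ)) ≤ (∫ v in (0:ℝ)..L, f v) + 2*(δ*M) := by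
    -- sum over Icc 1 N ≤ sum over Ico 1 K + f(Kδ) + f((K+1)δ) + sum over Ioc (K+1) N
    have hsub : Finset.Icc 1 N ⊆ ((Finset.Ico 1 K ∪ {K}) ∪ {K+1}) ∪ Finset.Ioc (K+1) N := by
      intro n hn
      simp only [Finset.mem_Icc] at hn
      simp only [Finset.mem_union, Finset.mem_Ico, Finset.mem_singleton, Finset.mem_Ioc]
      omega
    have hsum1 : (∑ n ∈ Finset.Icc 1 N, f (n * δ))
        ≤ (∑ n ∈ Finset.Ico 1 K, f (n * δ)) + f ((K:ℝ) * δ) + f (((K+1:ℕ):ℝ) * δ)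
          + ∑ n ∈ Finset.Ioc (K+1) N, f (n * δ) := by
      have t1 : (∑ n ∈ Finset.Icc 1 N, f (n * δ))
          ≤ ∑ n ∈ ((Finset.Ico 1 K ∪ {K}) ∪ {K+1}) ∪ Finset.Ioc (K+1) N, f (n * δ) :=
        Finset.sum_le_sum_of_subset_of_nonneg hsub (fun n _ _ => h0 _)
      have t2 := rs_sum_union_le ((Finset.Ico 1 K ∪ {K}) ∪ {K+1}) (Finset.Ioc (K+1) N)
        (fun n => f (n * δ)) (fun n => h0 _)
      have t3 := rs_sum_union_le (Finset.Ico 1 K ∪ {K}) {K+1}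
        (fun n => f (n * δ)) (fun n => h0 _)
      have t4 := rs_sum_union_le (Finset.Ico 1 K) {K}
        (fun n => f (n * δ)) (fun n => h0 _)
      simp only [Finset.sum_singleton] at t2 t3 t4
      push_cast at t1 t2 t3 t4 ⊢
      linarith
    have hA : δ * (∑ n ∈ Finset.Ico 1 K, f (n * δ)) ≤ ∫ t in (0:ℝ)..((K:ℝ)*δ), f t := by
      rcases Nat.eq_zero_or_pos K with h | h
      · simp [h]
      · have hsplit0 : (∫ t in (0:ℝ)..δ, f t) + (∫ t in δ..((K:ℝ)*δ), f t)
            = ∫ t in (0:ℝ)..((K:ℝ)*δ), f t :=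
          intervalIntegral.integral_add_adjacent_intervals
            (rs_integrable f M hm h0 hM _ _) (rs_integrable f M hm h0 hM _ _)
        have h0δ : 0 ≤ ∫ t in (0:ℝ)..δ, f t :=
          intervalIntegral.integral_nonneg (le_of_lt hδ) (fun t _ => h0 t)
        have := rs_chainA f M δ p hδ hm h0 hM hmono (K - 1)
          (by rw [show 1 + (K-1) = K by omega]; exact hKp)
        rw [show 1 + (K-1) = K by omega] at this
        linarith
    have hfK : f ((K:ℝ) * δ) ≤ M := hM _
    have hfK1 : f (((K+1:ℕ):ℝ) * δ) ≤ M := hM _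
    rcases le_or_gt N (K+1) with hc | hc
    · -- Ioc (K+1) N empty
      have hempty : Finset.Ioc (K+1) N = ∅ := by
        apply Finset.Ioc_eq_empty; omega
      have hKNδ : (K:ℝ)*δ ≤ (N:ℝ)*δ := by
        have : (K:ℝ) ≤ (N:ℝ) := by exact_mod_cast hKN
        nlinarith
      have hsplitKN : (∫ t in (0:ℝ)..((K:ℝ)*δ), f t) + (∫ t in ((K:ℝ)*δ)..((N:ℝ)*δ), f t)
          = ∫ t in (0:ℝ)..((N:ℝ)*δ), f t :=
        intervalIntegral.integral_add_adjacent_intervals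
          (rs_integrable f M hm h0 hM _ _) (rs_integrable f M hm h0 hM _ _)
      have hKNnn : 0 ≤ ∫ t in ((K:ℝ)*δ)..((N:ℝ)*δ), f t :=
        intervalIntegral.integral_nonneg hKNδ (fun t _ => h0 t)
      rw [hempty] at hsum1
      simp only [Finset.sum_empty] at hsum1
      nlinarith [hsum1, hA]
    · -- K + 1 < N, so K = ⌊p/δ⌋₊ and p < (K+1)δ
      have hKfl : K = ⌊p/δ⌋₊ := by omega
      have hpK1 : p ≤ ((K+1:ℕ):ℝ) * δ := by
        have h1 : p/δ < (⌊p/δ⌋₊:ℝ)+1 := Nat.lt_floor_add_one _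
        have h2 : p = (p/δ)*δ := by field_simp
        push_cast
        rw [hKfl]
        nlinarith
      have hB := rs_chainB f M δ p hδ hm h0 hM hanti (K+1) (by omega)
        (by exact_mod_cast hpK1) (N - (K+1))
      rw [show (K+1) + (N - (K+1)) = N by omega] at hB
      have hsplit1 : (∫ t in (0:ℝ)..((K:ℝ)*δ), f t)
          + (∫ t in ((K:ℝ)*δ)..(((K+1:ℕ):ℝ)*δ), f t)
          = ∫ t in (0:ℝ)..(((K+1:ℕ):ℝ)*δ), f t :=
        intervalIntegral.integral_add_adjacent_intervals
          (rs_integrable f M hm h0 hM _ _) (rs_integrable f M hm h0 hM _ _)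
      have hsplit2 : (∫ t in (0:ℝ)..(((K+1:ℕ):ℝ)*δ), f t)
          + (∫ t in (((K+1:ℕ):ℝ)*δ)..((N:ℝ)*δ), f t)
          = ∫ t in (0:ℝ)..((N:ℝ)*δ), f t :=
        intervalIntegral.integral_add_adjacent_intervals
          (rs_integrable f M hm h0 hM _ _) (rs_integrable f M hm h0 hM _ _)
      have hmid_nn : 0 ≤ ∫ t in ((K:ℝ)*δ)..(((K+1:ℕ):ℝ)*δ), f t :=
        intervalIntegral.integral_nonneg (by push_cast; nlinarith) (fun t _ => h0 t)
      have expand : δ * ((∑ n ∈ Finset.Ico 1 K, f (n * δ)) + f ((K:ℝ) * δ)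
          + f (((K+1:ℕ):ℝ) * δ) + ∑ n ∈ Finset.Ioc (K+1) N, f (n * δ))
          = δ * (∑ n ∈ Finset.Ico 1 K, f (n * δ)) + δ * f ((K:ℝ) * δ)
          + δ * f (((K+1:ℕ):ℝ) * δ) + δ * ∑ n ∈ Finset.Ioc (K+1) N, f (n * δ) := by ring
      have hmul : δ * (∑ n ∈ Finset.Icc 1 N, f (n * δ))
          ≤ δ * ((∑ n ∈ Finset.Ico 1 K, f (n * δ)) + f ((K:ℝ) * δ)
          + f (((K+1:ℕ):ℝ) * δ) + ∑ n ∈ Finset.Ioc (K+1) N, f (n * δ)) := by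
        apply mul_le_mul_of_nonneg_left hsum1 (le_of_lt hδ)
      rw [expand] at hmul
      have e1 : δ * f ((K:ℝ) * δ) ≤ δ * M := mul_le_mul_of_nonneg_left hfK (le_of_lt hδ)
      have e2 : δ * f (((K+1:ℕ):ℝ) * δ) ≤ δ * M := mul_le_mul_of_nonneg_left hfK1 (le_of_lt hδ)
      linarith
  -- LOWER BOUND: ∫₀ᴸ ≤ δ * sum + 2δM
  have hLower : (∫ v in (0:ℝ)..L, f v) ≤ δ * (∑ n ∈ Finset.Icc 1 N, f (n * δ)) + 2*(δ*M) := by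
    rcases eq_or_lt_of_le hKN with hc | hc
    · -- K = N : everything monotone region
      have hC := rs_chainC f M δ p hδ hm h0 hM hmono N (by rw [hc] at hKp; exact hKp)
      linarith
    · -- K < N: so K = ⌊p/δ⌋₊, p < (K+1)δ
      have hKfl : K = ⌊p/δ⌋₊ := by omega
      have hpK1 : p ≤ ((K+1:ℕ):ℝ) * δ := by
        have h1 : p/δ < (⌊p/δ⌋₊:ℝ)+1 := Nat.lt_floor_add_one _
        have h2 : p = (p/δ)*δ := by field_simp
        push_cast
        rw [hKfl]
        nlinarith
      have hC := rs_chainC f M δ p hδ hm h0 hM hmono K hKp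
      have hD := rs_chainD f M δ p hδ hm h0 hM hanti (K+1) (by omega)
        (by exact_mod_cast hpK1) (N - (K+1))
      rw [show (K+1) + (N - (K+1)) = N by omega] at hD
      have hsplit1 : (∫ t in (0:ℝ)..((K:ℝ)*δ), f t)
          + (∫ t in ((K:ℝ)*δ)..(((K+1:ℕ):ℝ)*δ), f t)
          = ∫ t in (0:ℝ)..(((K+1:ℕ):ℝ)*δ), f t :=
        intervalIntegral.integral_add_adjacent_intervals
          (rs_integrable f M hm h0 hM _ _) (rs_integrable f M hm h0 hM _ _)
      have hsplit2 : (∫ t in (0:ℝ)..(((K+1:ℕ):ℝ)*δ), f t)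
          + (∫ t in (((K+1:ℕ):ℝ)*δ)..((N:ℝ)*δ), f t)
          = ∫ t in (0:ℝ)..((N:ℝ)*δ), f t :=
        intervalIntegral.integral_add_adjacent_intervals
          (rs_integrable f M hm h0 hM _ _) (rs_integrable f M hm h0 hM _ _)
      have hmid : (∫ t in ((K:ℝ)*δ)..(((K+1:ℕ):ℝ)*δ), f t) ≤ δ * M := by
        have h := rs_cell_up f M hm h0 hM (a := (K:ℝ)*δ) (b := ((K+1:ℕ):ℝ)*δ)
          (by push_cast; nlinarith) (fun t _ => hM t)
        have : ((K+1:ℕ):ℝ)*δ - (K:ℝ)*δ = δ := by push_cast; ring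
        rw [this] at h; linarith
      -- ∑ Icc 1 K + ∑ Ico (K+1) N ≤ ∑ Icc 1 N
      have hdisj : Disjoint (Finset.Icc 1 K) (Finset.Ico (K+1) N) := by
        rw [Finset.disjoint_left]
        intro n hn hn'
        simp only [Finset.mem_Icc] at hn
        simp only [Finset.mem_Ico] at hn'
        omega
      have hsub2 : Finset.Icc 1 K ∪ Finset.Ico (K+1) N ⊆ Finset.Icc 1 N := by
        intro n hn
        simp only [Finset.mem_union, Finset.mem_Icc, Finset.mem_Ico] at hn ⊢
        omega
      have hsum2 : (∑ n ∈ Finset.Icc 1 K, f (n * δ)) + (∑ n ∈ Finset.Ico (K+1) N, f (n * δ))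
          ≤ ∑ n ∈ Finset.Icc 1 N, f (n * δ) := by
        rw [← Finset.sum_union hdisj]
        exact Finset.sum_le_sum_of_subset_of_nonneg hsub2 (fun n _ _ => h0 _)
      nlinarith [hC, hD]
  -- combine
  have habs : |δ * (∑ n ∈ Finset.Icc 1 N, f (n * δ)) - ∫ v in (0:ℝ)..L, f v| ≤ 2*(δ*M) := by
    rw [abs_le]; constructor <;> linarith
  have hrw : (∑ n ∈ Finset.Icc 1 N, f (n * δ)) - (∫ v in (0:ℝ)..L, f v)/δ
      = (δ * (∑ n ∈ Finset.Icc 1 N, f (n * δ)) - ∫ v in (0:ℝ)..L, f v)/δ := by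
    field_simp
    ring
  rw [hrw, abs_div, abs_of_pos hδ, div_le_iff₀ hδ]
  calc |δ * (∑ n ∈ Finset.Icc 1 N, f (n * δ)) - ∫ v in (0:ℝ)..L, f v| ≤ 2*(δ*M) := habs
    _ = 2*M*δ := by ring

def rsD (u v : ℝ) : ℝ := min (1/u^2) (1/(u*v)) - v^2/(2*u)
def rsI1 (u v : ℝ) : ℝ := Real.sqrt (v^4 + 4*u) / (2*u)
def rsI2 (u v : ℝ) : ℝ := Real.sqrt (v^4 - 4*u) / (2*u)
def rsf (u v : ℝ) : ℝ := 2 * max (min (rsD u v) (rsI1 u v) - rsI2 u v) 0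

lemma rsf_nonneg (u v : ℝ) : 0 ≤ rsf u v := by
  unfold rsf
  have := le_max_right (min (rsD u v) (rsI1 u v) - rsI2 u v) (0:ℝ)
  linarith

lemma rsf_measurable (u : ℝ) : Measurable (rsf u) := by
  unfold rsf rsD rsI1 rsI2
  apply Measurable.const_mul
  apply Measurable.max _ measurable_const
  apply Measurable.sub
  · apply Measurable.min
    · apply Measurable.sub
      · apply Measurable.min measurable_const
        simp only [one_div]
        exact (measurable_const.mul measurable_id).inv
      · exact ((measurable_id.pow_const 2).div_const _)
    · exact (Real.continuous_sqrt.measurable.comp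
        ((measurable_id.pow_const 4).add_const _)).div_const _
  · exact (Real.continuous_sqrt.measurable.comp
      ((measurable_id.pow_const 4).sub_const _)).div_const _

lemma rsf_le (u : ℝ) (hu : 0 < u) (v : ℝ) : rsf u v ≤ 2 * Real.sqrt 2 / Real.sqrt u := by
  have hsu : 0 < Real.sqrt u := Real.sqrt_pos.2 hu
  have hs2 : (0:ℝ) < Real.sqrt 2 := Real.sqrt_pos.2 (by norm_num)
  have e2 : Real.sqrt u ^ 2 = u := Real.sq_sqrt (le_of_lt hu)
  have e3 : Real.sqrt 2 ^ 2 = 2 := Real.sq_sqrt (by norm_num)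
  set w := 2 * Real.sqrt 2 * Real.sqrt u with hw
  have hwpos : 0 < w := by positivity
  have hwsq : w^2 = 8*u := by rw [hw]; nlinarith [e2, e3]
  set s1 := Real.sqrt (v^4 + 4*u) with hs1def
  set s2 := Real.sqrt (v^4 - 4*u) with hs2def
  have hs1nn : 0 ≤ s1 := Real.sqrt_nonneg _
  have hs2nn : 0 ≤ s2 := Real.sqrt_nonneg _
  have hsub : s1 - s2 ≤ w := by
    rcases le_total (v^4) (4*u) with hc | hc
    · have hz : s2 = 0 := Real.sqrt_eq_zero'.2 (by linarith)
      have h1 : s1 ≤ Real.sqrt (8*u) := Real.sqrt_le_sqrt (by linarith)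
      have h2 : Real.sqrt (8*u) = w := by
        rw [show (8:ℝ)*u = w^2 from hwsq.symm, Real.sqrt_sq hwpos.le]
      rw [hz]; linarith [h1, h2 ▸ h1]
    · have hq1 : s1^2 = v^4 + 4*u := Real.sq_sqrt (by nlinarith)
      have hq2 : s2^2 = v^4 - 4*u := Real.sq_sqrt (by linarith)
      have hs1w : w ≤ s1 := by
        have h1 : Real.sqrt (8*u) ≤ s1 := Real.sqrt_le_sqrt (by linarith)
        have h2 : Real.sqrt (8*u) = w := by
          rw [show (8:ℝ)*u = w^2 from hwsq.symm, Real.sqrt_sq hwpos.le]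
        linarith
      have key : (s1 - s2 - w) * (s1 + s2 + w) = -(2*w*s2) := by
        linear_combination hq1 - hq2 - hwsq
      nlinarith [key, mul_nonneg hwpos.le hs2nn, hs1w, hs2nn, hwpos]
  -- now conclude
  have hB : Real.sqrt 2 / Real.sqrt u = w / (2*u) := by
    rw [div_eq_div_iff hsu.ne' (by positivity : (2*u:ℝ) ≠ 0)]
    linear_combination (-2) * Real.sqrt 2 * e2
  have hmain : max (min (rsD u v) (rsI1 u v) - rsI2 u v) 0 ≤ Real.sqrt 2 / Real.sqrt u := by
    apply max_le _ (by positivity)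
    have h1 : min (rsD u v) (rsI1 u v) - rsI2 u v ≤ rsI1 u v - rsI2 u v := by
      have := min_le_right (rsD u v) (rsI1 u v); linarith
    have h2 : rsI1 u v - rsI2 u v ≤ Real.sqrt 2 / Real.sqrt u := by
      rw [hB]
      unfold rsI1 rsI2
      rw [div_sub_div_same, div_le_div_iff₀ (by linarith) (by linarith)]
      nlinarith [hsub]
    linarith
  unfold rsf
  calc 2 * max (min (rsD u v) (rsI1 u v) - rsI2 u v) 0
      ≤ 2 * (Real.sqrt 2 / Real.sqrt u) := by linarith [hmain]
    _ = 2 * Real.sqrt 2 / Real.sqrt u := by ring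

lemma rs_quad_upper (u v t : ℝ) (hu : 0 < u) :
    t*(u*t+v^2) ≤ 1 ↔
      (-(v^2) - Real.sqrt (v^4+4*u))/(2*u) ≤ t ∧ t ≤ (-(v^2) + Real.sqrt (v^4+4*u))/(2*u) := by
  set s := Real.sqrt (v^4+4*u) with hsdef
  have hs : s^2 = v^4+4*u := Real.sq_sqrt (by positivity)
  have hsnn : 0 ≤ s := Real.sqrt_nonneg _
  have h2u : (0:ℝ) < 2*u := by linarith
  rw [div_le_iff₀ h2u, le_div_iff₀ h2u]
  constructor
  · intro h
    constructor
    · nlinarith [sq_nonneg (2*u*t + v^2 + s), hs, hsnn, h, hu]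
    · nlinarith [sq_nonneg (2*u*t + v^2 - s), hs, hsnn, h, hu]
  · rintro ⟨h1, h2⟩
    have hk1 : 0 ≤ 2*u*t + v^2 + s := by linarith
    have hk2 : 0 ≤ s - (2*u*t + v^2) := by linarith
    nlinarith [mul_nonneg hk2 hk1, hs, hu]

lemma rs_quad_lower (u v t : ℝ) (hu : 0 < u) :
    -1 ≤ t*(u*t+v^2) ↔
      ¬((-(v^2) - Real.sqrt (v^4-4*u))/(2*u) < t ∧ t < (-(v^2) + Real.sqrt (v^4-4*u))/(2*u)) := by
  set s := Real.sqrt (v^4-4*u) with hsdef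
  have hsnn : 0 ≤ s := Real.sqrt_nonneg _
  have h2u : (0:ℝ) < 2*u := by linarith
  rcases le_or_gt (v^4) (4*u) with hc | hc
  · have hz : s = 0 := Real.sqrt_eq_zero'.2 (by linarith)
    rw [hz]
    constructor
    · intro _ ⟨hl, hr⟩
      rw [div_lt_iff₀ h2u] at hl
      rw [lt_div_iff₀ h2u] at hr
      linarith
    · intro _
      nlinarith [sq_nonneg (2*u*t + v^2), hc, hu]
  · have hs : s^2 = v^4-4*u := Real.sq_sqrt (by linarith)
    rw [div_lt_iff₀ h2u, lt_div_iff₀ h2u]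
    constructor
    · intro h ⟨h1, h2⟩
      have key : 0 < (s - (2*u*t+v^2)) * (2*u*t + v^2 + s) := by
        apply mul_pos <;> linarith
      nlinarith [key, hs, h, hu]
    · intro h
      rcases not_and_or.1 h with h1 | h1
      · push_neg at h1
        nlinarith [hs, h1, hu, mul_nonneg hsnn hsnn]
      · push_neg at h1
        nlinarith [hs, h1, hu, mul_nonneg hsnn hsnn]

lemma rs_box (u v t : ℝ) (hu : 0 < u) (hv : 0 < v) :
    (|u*v*t| ≤ 1 ∧ |u*v*t+v^3| ≤ 1 ∧ |u^2*t| ≤ 1 ∧ |u^2*t+u*v^2| ≤ 1) ↔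
      (-(min (1/u^2) (1/(u*v))) ≤ t ∧ t ≤ min (1/u^2) (1/(u*v)) - v^2/u) := by
  have huv : (0:ℝ) < u*v := by positivity
  have hu2 : (0:ℝ) < u^2 := by positivity
  have e2 : u^2 * -(1/u^2) = -1 := by field_simp
  have e2' : u^2 * (1/u^2 - v^2/u) = 1 - u*v^2 := by field_simp
  have euv : (u*v) * -(1/(u*v)) = -1 := by field_simp
  have euv' : (u*v) * (1/(u*v) - v^2/u) = 1 - v^3 := by field_simp
  have hv3 : (0:ℝ) < v^3 := by positivity
  have huv2 : (0:ℝ) < u*v^2 := by positivity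
  simp only [abs_le]
  constructor
  · rintro ⟨⟨h3a, h3b⟩, ⟨h4a, h4b⟩, ⟨h5a, h5b⟩, ⟨h6a, h6b⟩⟩
    constructor
    · rcases le_total (1/u^2) (1/(u*v)) with h | h
      · rw [min_eq_left h]
        refine le_of_mul_le_mul_left ?_ hu2
        linarith [e2, h5a]
      · rw [min_eq_right h]
        refine le_of_mul_le_mul_left ?_ huv
        linarith [euv, h3a]
    · rcases le_total (1/u^2) (1/(u*v)) with h | h
      · rw [min_eq_left h]
        refine le_of_mul_le_mul_left ?_ hu2
        linarith [e2', h6b]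
      · rw [min_eq_right h]
        refine le_of_mul_le_mul_left ?_ huv
        linarith [euv', h4b]
  · rintro ⟨hlo, hhi⟩
    have hm1 : min (1/u^2) (1/(u*v)) ≤ 1/u^2 := min_le_left _ _
    have hm2 : min (1/u^2) (1/(u*v)) ≤ 1/(u*v) := min_le_right _ _
    have ht1 : -(1/u^2) ≤ t := by linarith
    have ht2 : t ≤ 1/u^2 - v^2/u := by linarith
    have ht3 : -(1/(u*v)) ≤ t := by linarith
    have ht4 : t ≤ 1/(u*v) - v^2/u := by linarith
    have hb5a : -1 ≤ u^2*t := by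
      have := mul_le_mul_of_nonneg_left ht1 hu2.le
      linarith [e2]
    have hb5b' : u^2*t ≤ 1 - u*v^2 := by
      have := mul_le_mul_of_nonneg_left ht2 hu2.le
      linarith [e2']
    have hb3a : -1 ≤ u*v*t := by
      have := mul_le_mul_of_nonneg_left ht3 huv.le
      linarith [euv]
    have hb3b' : u*v*t ≤ 1 - v^3 := by
      have := mul_le_mul_of_nonneg_left ht4 huv.le
      linarith [euv']
    exact ⟨⟨hb3a, by linarith⟩, ⟨by linarith, by linarith⟩,
      ⟨hb5a, by linarith⟩, ⟨by linarith, by linarith⟩⟩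

set_option maxHeartbeats 1000000 in
lemma F1_eq (u v : ℝ) (hu : 0 < u) (hv : 0 < v) : F1 u v = rsf u v := by
  have h2u : (0:ℝ) < 2*u := by linarith
  set c : ℝ := -(v^2)/(2*u) with hc
  set D := rsD u v with hD
  set I1 := rsI1 u v with hI1
  set I2 := rsI2 u v with hI2
  have hI1nn : 0 ≤ I1 := by rw [hI1]; unfold rsI1; positivity
  have hI2nn : 0 ≤ I2 := by rw [hI2]; unfold rsI2; positivity
  have hE1 : (-(v^2) - Real.sqrt (v^4+4*u))/(2*u) = c - I1 := by
    rw [hc, hI1]; unfold rsI1; ring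
  have hE2 : (-(v^2) + Real.sqrt (v^4+4*u))/(2*u) = c + I1 := by
    rw [hc, hI1]; unfold rsI1; ring
  have hE3 : (-(v^2) - Real.sqrt (v^4-4*u))/(2*u) = c - I2 := by
    rw [hc, hI2]; unfold rsI2; ring
  have hE4 : (-(v^2) + Real.sqrt (v^4-4*u))/(2*u) = c + I2 := by
    rw [hc, hI2]; unfold rsI2; ring
  have hB1 : -(min (1/u^2) (1/(u*v))) = c - D := by
    rw [hc, hD]; unfold rsD; ring
  have hB2 : min (1/u^2) (1/(u*v)) - v^2/u = c + D := by
    rw [hc, hD]; unfold rsD; ring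
  have hset : {t : ℝ |
      0 < |t * (u * t + v ^ 2)| ∧ |t * (u * t + v ^ 2)| ≤ 1 ∧
      |u * v * t| ≤ 1 ∧ |u * v * t + v ^ 3| ≤ 1 ∧
      |u ^ 2 * t| ≤ 1 ∧ |u ^ 2 * t + u * v ^ 2| ≤ 1}
      = (Set.Icc (c - min D I1) (c + min D I1) \ Set.Ioo (c - I2) (c + I2))
        \ {0, -(v^2)/u} := by
    ext t
    simp only [Set.mem_setOf_eq, Set.mem_diff, Set.mem_Icc, Set.mem_Ioo,
      Set.mem_insert_iff, Set.mem_singleton_iff, not_or]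
    constructor
    · rintro ⟨h1, h2, h3, h4, h5, h6⟩
      have hq := abs_le.1 h2
      have hup := (rs_quad_upper u v t hu).1 hq.2
      rw [hE1, hE2] at hup
      have hlo := (rs_quad_lower u v t hu).1 hq.1
      rw [hE3, hE4] at hlo
      have hbox := (rs_box u v t hu hv).1 ⟨h3, h4, h5, h6⟩
      rw [hB1, hB2] at hbox
      have habs : t*(u*t+v^2) ≠ 0 := by
        intro hz
        rw [hz] at h1
        simp at h1
      have ht0 : t ≠ 0 := by
        intro h
        apply habs
        rw [h]; ring
      have htv : t ≠ -(v^2)/u := by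
        intro h
        apply habs
        rw [h]; field_simp
        ring
      refine ⟨⟨⟨?_, ?_⟩, hlo⟩, ht0, htv⟩
      · rcases le_total D I1 with h | h
        · rw [min_eq_left h]; exact hbox.1
        · rw [min_eq_right h]; exact hup.1
      · rcases le_total D I1 with h | h
        · rw [min_eq_left h]; exact hbox.2
        · rw [min_eq_right h]; exact hup.2
    · rintro ⟨⟨⟨hl, hr⟩, hnoo⟩, ht0, htv⟩
      have hmD : min D I1 ≤ D := min_le_left _ _
      have hmI : min D I1 ≤ I1 := min_le_right _ _
      have hup : t*(u*t+v^2) ≤ 1 := by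
        rw [rs_quad_upper u v t hu, hE1, hE2]
        constructor <;> linarith
      have hlo : -1 ≤ t*(u*t+v^2) := by
        rw [rs_quad_lower u v t hu, hE3, hE4]
        exact hnoo
      have hbox := (rs_box u v t hu hv).2 (by rw [hB1, hB2]; constructor <;> linarith)
      have hqne : t*(u*t+v^2) ≠ 0 := by
        have h2' : u*t+v^2 ≠ 0 := by
          intro h
          apply htv
          field_simp
          linarith
        exact mul_ne_zero ht0 h2'
      exact ⟨abs_pos.2 hqne, abs_le.2 ⟨hlo, hup⟩, hbox.1, hbox.2.1, hbox.2.2.1, hbox.2.2.2⟩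
  unfold F1
  rw [hset]
  have hpairfin : ({0, -(v^2)/u} : Set ℝ).Finite := (Set.finite_singleton _).insert _
  rw [measure_diff_null (hpairfin.measure_zero volume)]
  rcases le_or_gt (min D I1) I2 with hr | hr
  · have hsub : Set.Icc (c - min D I1) (c + min D I1) \ Set.Ioo (c - I2) (c + I2)
        ⊆ {c - I2, c + I2} := by
      rintro t ⟨htI, htO⟩
      simp only [Set.mem_Icc] at htI
      simp only [Set.mem_Ioo, not_and_or, not_lt] at htO
      simp only [Set.mem_insert_iff, Set.mem_singleton_iff]
      rcases htO with h | h
      · left; exact le_antisymm h (by linarith [htI.1])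
      · right; exact le_antisymm (by linarith [htI.2]) h
    have hpair2 : ({c - I2, c + I2} : Set ℝ).Finite := (Set.finite_singleton _).insert _
    rw [measure_mono_null hsub (hpair2.measure_zero volume)]
    unfold rsf
    rw [← hD, ← hI1, ← hI2, max_eq_right (by linarith : min D I1 - I2 ≤ 0)]
    simp
  · have hsub : Set.Ioo (c - I2) (c + I2) ⊆ Set.Icc (c - min D I1) (c + min D I1) :=
      Set.Ioo_subset_Icc_self.trans (Set.Icc_subset_Icc (by linarith) (by linarith))
    rw [measure_diff hsub measurableSet_Ioo.nullMeasurableSet measure_Ioo_lt_top.ne]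
    rw [Real.volume_Icc, Real.volume_Ioo]
    rw [show c + min D I1 - (c - min D I1) = 2*(min D I1) by ring,
        show c + I2 - (c - I2) = 2*I2 by ring]
    rw [← ENNReal.ofReal_sub _ (by linarith : (0:ℝ) ≤ 2*I2)]
    rw [ENNReal.toReal_ofReal (by linarith)]
    unfold rsf
    rw [← hD, ← hI1, ← hI2, max_eq_left (by linarith : (0:ℝ) ≤ min D I1 - I2)]
    ring

lemma rsI1_mono (u : ℝ) (hu : 0 < u) : MonotoneOn (rsI1 u) (Set.Ici 0) := by
  intro a ha b hb hab
  unfold rsI1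
  exact (div_le_div_iff_of_pos_right (by linarith)).mpr
    (Real.sqrt_le_sqrt (by nlinarith [pow_le_pow_left₀ ha hab 4]))

lemma rsI2_mono (u : ℝ) (hu : 0 < u) : MonotoneOn (rsI2 u) (Set.Ici 0) := by
  intro a ha b hb hab
  unfold rsI2
  exact (div_le_div_iff_of_pos_right (by linarith)).mpr
    (Real.sqrt_le_sqrt (by nlinarith [pow_le_pow_left₀ ha hab 4]))

lemma rsD_anti (u : ℝ) (hu : 0 < u) : AntitoneOn (rsD u) (Set.Ioi 0) := by
  intro a ha b hb hab
  simp only [Set.mem_Ioi] at ha hb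
  unfold rsD
  have h1 : 1/(u*b) ≤ 1/(u*a) := by
    apply one_div_le_one_div_of_le (by positivity)
    exact mul_le_mul_of_nonneg_left hab hu.le
  have h2 : min (1/u^2) (1/(u*b)) ≤ min (1/u^2) (1/(u*a)) := min_le_min le_rfl h1
  have h3 : a^2/(2*u) ≤ b^2/(2*u) :=
    (div_le_div_iff_of_pos_right (by linarith)).mpr (by nlinarith)
  linarith

lemma rs_psi_anti (u : ℝ) (hu : 0 < u) :
    AntitoneOn (fun v => rsI1 u v - rsI2 u v) (Set.Ici (Real.sqrt (Real.sqrt (4*u)))) := by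
  set q0 := Real.sqrt (Real.sqrt (4*u)) with hq0
  have h4u : (0:ℝ) < 4*u := by linarith
  have hq4 : q0^4 = 4*u := by
    rw [hq0, show (4:ℕ) = 2*2 from rfl, pow_mul,
      Real.sq_sqrt (Real.sqrt_nonneg _), Real.sq_sqrt h4u.le]
  have hq0pos : 0 < q0 := Real.sqrt_pos.2 (Real.sqrt_pos.2 h4u)
  intro a ha b hb hab
  simp only [Set.mem_Ici] at ha hb
  have ha0 : 0 < a := lt_of_lt_of_le hq0pos ha
  have hxa : 4*u ≤ a^4 := by rw [← hq4]; exact pow_le_pow_left₀ hq0pos.le ha 4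
  have hxb : 4*u ≤ b^4 := by rw [← hq4]; exact pow_le_pow_left₀ hq0pos.le hb 4
  have hxab : a^4 ≤ b^4 := pow_le_pow_left₀ ha0.le hab 4
  unfold rsI1 rsI2
  set s1a := Real.sqrt (a^4 + 4*u) with e1a
  set s2a := Real.sqrt (a^4 - 4*u) with e2a
  set s1b := Real.sqrt (b^4 + 4*u) with e1b
  set s2b := Real.sqrt (b^4 - 4*u) with e2b
  have q1a : s1a^2 = a^4 + 4*u := Real.sq_sqrt (by linarith)
  have q2a : s2a^2 = a^4 - 4*u := Real.sq_sqrt (by linarith)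
  have q1b : s1b^2 = b^4 + 4*u := Real.sq_sqrt (by linarith)
  have q2b : s2b^2 = b^4 - 4*u := Real.sq_sqrt (by linarith)
  have n1a : 0 ≤ s1a := Real.sqrt_nonneg _
  have n2a : 0 ≤ s2a := Real.sqrt_nonneg _
  have n1b : 0 ≤ s1b := Real.sqrt_nonneg _
  have n2b : 0 ≤ s2b := Real.sqrt_nonneg _
  have key : s1b * s2a ≤ s1a * s2b := by
    rw [e1a, e2a, e1b, e2b, ← Real.sqrt_mul (by linarith) , ← Real.sqrt_mul (by linarith)]
    apply Real.sqrt_le_sqrt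
    nlinarith
  have hsq : (s1b + s2a)^2 ≤ (s1a + s2b)^2 := by nlinarith [key]
  have hmain : s1b + s2a ≤ s1a + s2b := by nlinarith [hsq, n1b, n2a, n1a, n2b]
  show s1b/(2*u) - s2b/(2*u) ≤ s1a/(2*u) - s2a/(2*u)
  rw [div_sub_div_same, div_sub_div_same]
  exact (div_le_div_iff_of_pos_right (by linarith : (0:ℝ) < 2*u)).mpr (by linarith)

lemma rsI2_zero (u v : ℝ) (h4 : v^4 ≤ 4*u) : rsI2 u v = 0 := by
  unfold rsI2
  rw [Real.sqrt_eq_zero'.2 (by linarith), zero_div]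

lemma rsf_eq_I1 (u v : ℝ) (hu : 0 < u) (h4 : v^4 ≤ 4*u) (hID : rsI1 u v ≤ rsD u v) :
    rsf u v = 2 * rsI1 u v := by
  have hI1nn : 0 ≤ rsI1 u v := by unfold rsI1; positivity
  unfold rsf
  rw [min_eq_right hID, rsI2_zero u v h4, sub_zero, max_eq_left hI1nn]

lemma rsf_eq_D (u v : ℝ) (hu : 0 < u) (h4 : v^4 ≤ 4*u) (hDI : rsD u v ≤ rsI1 u v) :
    rsf u v = 2 * max (rsD u v) 0 := by
  unfold rsf
  rw [min_eq_left hDI, rsI2_zero u v h4, sub_zero]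

lemma rsf_anti_upper (u : ℝ) (hu : 0 < u) :
    AntitoneOn (rsf u) (Set.Ici (Real.sqrt (Real.sqrt (4*u)))) := by
  set q0 := Real.sqrt (Real.sqrt (4*u)) with hq0
  have h4u : (0:ℝ) < 4*u := by linarith
  have hq0pos : 0 < q0 := Real.sqrt_pos.2 (Real.sqrt_pos.2 h4u)
  intro a ha b hb hab
  simp only [Set.mem_Ici] at ha hb
  have ha0 : 0 < a := lt_of_lt_of_le hq0pos ha
  have hb0 : 0 < b := lt_of_lt_of_le hq0pos hb
  unfold rsf
  have hDb : rsD u b ≤ rsD u a := rsD_anti u hu (Set.mem_Ioi.2 ha0) (Set.mem_Ioi.2 hb0) hab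
  have hI2ab : rsI2 u a ≤ rsI2 u b := rsI2_mono u hu (Set.mem_Ici.2 ha0.le) (Set.mem_Ici.2 hb0.le) hab
  have hpsi : rsI1 u b - rsI2 u b ≤ rsI1 u a - rsI2 u a := rs_psi_anti u hu ha hb hab
  have hmin : min (rsD u b) (rsI1 u b) - rsI2 u b ≤ min (rsD u a) (rsI1 u a) - rsI2 u a := by
    rw [← min_sub_sub_right, ← min_sub_sub_right]
    exact min_le_min (by linarith) hpsi
  have := max_le_max hmin (le_refl (0:ℝ))
  linarith

lemma rs_anti_glue {f : ℝ → ℝ} {s t : Set ℝ} {b : ℝ} (hs : AntitoneOn f s) (ht : AntitoneOn f t)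
    (hbs : b ∈ s) (hbt : b ∈ t) (hsb : ∀ x ∈ s, x ≤ b) (hbt' : ∀ y ∈ t, b ≤ y) :
    AntitoneOn f (s ∪ t) := by
  intro x hx y hy hxy
  rcases hx with hx | hx <;> rcases hy with hy | hy
  · exact hs hx hy hxy
  · calc f y ≤ f b := ht hbt hy (hbt' y hy)
      _ ≤ f x := hs hx hbs (hsb x hx)
  · have : x = y := le_antisymm hxy (le_trans (hsb y hy) (hbt' x hx))
    rw [this]
  · exact ht hx hy hxy

lemma rsf_unimodal (u : ℝ) (hu : 0 < u) : ∃ p : ℝ, 0 ≤ p ∧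
    MonotoneOn (rsf u) (Set.Ioc 0 p) ∧ AntitoneOn (rsf u) (Set.Ici p ∩ Set.Ioi 0) := by
  set q0 := Real.sqrt (Real.sqrt (4*u)) with hq0
  have h4u : (0:ℝ) < 4*u := by linarith
  have hq0pos : 0 < q0 := Real.sqrt_pos.2 (Real.sqrt_pos.2 h4u)
  have hq4 : q0^4 = 4*u := by
    rw [hq0, show (4:ℕ) = 2*2 from rfl, pow_mul,
      Real.sq_sqrt (Real.sqrt_nonneg _), Real.sq_sqrt h4u.le]
  have hup : AntitoneOn (rsf u) (Set.Ici q0) := rsf_anti_upper u hu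
  have h2I1mono : ∀ s : Set ℝ, s ⊆ Set.Ici 0 → MonotoneOn (fun v => 2 * rsI1 u v) s := by
    intro s hs a ha b hb hab
    have := rsI1_mono u hu (hs ha) (hs hb) hab
    simp only
    linarith
  have h2Danti : ∀ s : Set ℝ, s ⊆ Set.Ioi 0 → AntitoneOn (fun v => 2 * max (rsD u v) 0) s := by
    intro s hs a ha b hb hab
    have := rsD_anti u hu (hs ha) (hs hb) hab
    have := max_le_max this (le_refl (0:ℝ))
    simp only
    linarith
  have hpow4 : ∀ v : ℝ, 0 ≤ v → v ≤ q0 → v^4 ≤ 4*u := by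
    intro v h0 h1
    rw [← hq4]
    exact pow_le_pow_left₀ h0 h1 4
  by_cases hcross : rsI1 u q0 ≤ rsD u q0
  · refine ⟨q0, hq0pos.le, ?_, ?_⟩
    · have heq : Set.EqOn (fun v => 2 * rsI1 u v) (rsf u) (Set.Ioc 0 q0) := by
        intro v hv
        simp only
        refine (rsf_eq_I1 u v hu (hpow4 v hv.1.le hv.2) ?_).symm
        calc rsI1 u v ≤ rsI1 u q0 :=
              rsI1_mono u hu (Set.mem_Ici.2 hv.1.le) (Set.mem_Ici.2 hq0pos.le) hv.2
          _ ≤ rsD u q0 := hcross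
          _ ≤ rsD u v := rsD_anti u hu (Set.mem_Ioi.2 hv.1) (Set.mem_Ioi.2 hq0pos) hv.2
      exact (h2I1mono _ (fun x hx => le_of_lt hx.1)).congr heq
    · exact hup.mono Set.inter_subset_left
  · push_neg at hcross
    by_cases hex : ∃ w, w ∈ Set.Ioc (0:ℝ) q0 ∧ rsI1 u w ≤ rsD u w
    · obtain ⟨w, hw, hwle⟩ := hex
      have hgcont : ContinuousOn (fun v => rsI1 u v - rsD u v) (Set.Icc w q0) := by
        apply ContinuousOn.sub
        · apply Continuous.continuousOn
          unfold rsI1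
          exact (Real.continuous_sqrt.comp (by continuity)).div_const _
        · unfold rsD
          have hg : ContinuousOn (fun v : ℝ => 1/(u*v)) (Set.Icc w q0) := by
            apply ContinuousOn.div continuousOn_const
            · exact (continuous_const.mul continuous_id).continuousOn
            · intro x hx
              have : 0 < x := lt_of_lt_of_le hw.1 hx.1
              positivity
          have hmin : ContinuousOn (fun v : ℝ => min (1/u^2) (1/(u*v))) (Set.Icc w q0) :=
            (continuous_const.min continuous_id).comp_continuousOn hg
          exact hmin.sub ((continuous_pow 2).div_const _).continuousOn
      have hivt := intermediate_value_Icc hw.2 hgcont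
      have h0mem : (0:ℝ) ∈ Set.Icc (rsI1 u w - rsD u w) (rsI1 u q0 - rsD u q0) :=
        ⟨by linarith, by linarith⟩
      obtain ⟨p, hpmem, hgp⟩ := hivt h0mem
      have hppos : 0 < p := lt_of_lt_of_le hw.1 hpmem.1
      have hgp' : rsI1 u p = rsD u p := by simpa [sub_eq_zero] using hgp
      have hgmono : ∀ x y : ℝ, 0 < x → 0 < y → x ≤ y →
          rsI1 u x - rsD u x ≤ rsI1 u y - rsD u y := by
        intro x y hx hy hxy
        have h1 := rsI1_mono u hu (Set.mem_Ici.2 hx.le) (Set.mem_Ici.2 hy.le) hxy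
        have h2 := rsD_anti u hu (Set.mem_Ioi.2 hx) (Set.mem_Ioi.2 hy) hxy
        linarith
      refine ⟨p, hppos.le, ?_, ?_⟩
      · have heq : Set.EqOn (fun v => 2 * rsI1 u v) (rsf u) (Set.Ioc 0 p) := by
          intro v hv
          simp only
          refine (rsf_eq_I1 u v hu (hpow4 v hv.1.le (le_trans hv.2 hpmem.2)) ?_).symm
          have := hgmono v p hv.1 hppos hv.2
          linarith [hgp]
        exact (h2I1mono _ (fun x hx => le_of_lt hx.1)).congr heq
      · have hA : AntitoneOn (rsf u) (Set.Icc p q0) := by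
          have heq : Set.EqOn (fun v => 2 * max (rsD u v) 0) (rsf u) (Set.Icc p q0) := by
            intro v hv
            simp only
            refine (rsf_eq_D u v hu (hpow4 v (le_trans hppos.le hv.1) hv.2) ?_).symm
            have := hgmono p v hppos (lt_of_lt_of_le hppos hv.1) hv.1
            linarith [hgp]
          exact (h2Danti _ (fun x hx => lt_of_lt_of_le hppos hx.1)).congr heq
        have hglue : AntitoneOn (rsf u) (Set.Icc p q0 ∪ Set.Ici q0) :=
          rs_anti_glue hA hup ⟨hpmem.2, le_rfl⟩ (Set.mem_Ici.2 le_rfl) (fun x hx => hx.2)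
            (fun y hy => hy)
        rw [Set.Icc_union_Ici_eq_Ici hpmem.2] at hglue
        exact hglue.mono Set.inter_subset_left
    · push_neg at hex
      refine ⟨0, le_rfl, ?_, ?_⟩
      · rw [Set.Ioc_self]
        intro a ha
        exact absurd ha (Set.notMem_empty a)
      · have hA : AntitoneOn (rsf u) (Set.Ioc 0 q0) := by
          have heq : Set.EqOn (fun v => 2 * max (rsD u v) 0) (rsf u) (Set.Ioc 0 q0) := by
            intro v hv
            simp only
            exact (rsf_eq_D u v hu (hpow4 v hv.1.le hv.2) (le_of_lt (hex v hv))).symm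
          exact (h2Danti _ (fun x hx => hx.1)).congr heq
        have hglue : AntitoneOn (rsf u) (Set.Ioc 0 q0 ∪ Set.Ici q0) :=
          rs_anti_glue hA hup ⟨hq0pos, le_rfl⟩ (Set.mem_Ici.2 le_rfl) (fun x hx => hx.2) (fun y hy => hy)
        rw [Set.Ioc_union_Ici_eq_Ioi hq0pos] at hglue
        intro x hx y hy hxy
        exact hglue hx.2 hy.2 hxy

/-- Euler–Maclaurin type estimate: the Riemann sum of `F₁(u, ·)` with mesh `δ`
approximates `F₂(u)/δ` with error at most `6/√u`. -/
theorem riemann_sum_F1_approx (u δ : ℝ) (hu : 0 < u) (hδ : 0 < δ) :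
    |(∑ n ∈ Finset.Icc 1 ⌊1 / (δ * u ^ 2)⌋₊, F1 u (n * δ)) - F2 u / δ|
      ≤ 6 / Real.sqrt u := by
  set L : ℝ := 1/u^2 with hL
  have hLpos : 0 < L := by rw [hL]; positivity
  have hfloor : (1 : ℝ) / (δ * u ^ 2) = L / δ := by
    rw [hL, mul_comm δ (u^2), ← div_div]
  obtain ⟨p, hp0, hmono, hanti⟩ := rsf_unimodal u hu
  set M : ℝ := 2*Real.sqrt 2/Real.sqrt u with hM
  have key := rs_estimate (rsf u) M L δ p hδ hLpos hp0 (rsf_measurable u)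
    (rsf_nonneg u) (rsf_le u hu) hmono hanti
  have hsum : ∑ n ∈ Finset.Icc 1 ⌊L/δ⌋₊, F1 u (n*δ)
      = ∑ n ∈ Finset.Icc 1 ⌊L/δ⌋₊, rsf u (n*δ) := by
    apply Finset.sum_congr rfl
    intro n hn
    simp only [Finset.mem_Icc] at hn
    have hn1 : (1:ℝ) ≤ (n:ℝ) := by exact_mod_cast hn.1
    exact F1_eq u _ hu (by nlinarith)
  have hint : F2 u = ∫ v in (0:ℝ)..L, rsf u v := by
    unfold F2
    rw [← hL]
    apply intervalIntegral.integral_congr_ae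
    filter_upwards with x hx
    rw [Set.uIoc_of_le hLpos.le] at hx
    exact F1_eq u x hu hx.1
  rw [hfloor, hsum, hint]
  refine le_trans key ?_
  rw [hM]
  have hsu : 0 < Real.sqrt u := Real.sqrt_pos.2 hu
  have h2 : Real.sqrt 2 ≤ 1.5 := by
    nlinarith [Real.sq_sqrt (by norm_num : (0:ℝ) ≤ 2), Real.sqrt_nonneg 2]
  rw [show 2*(2*Real.sqrt 2/Real.sqrt u) = (4*Real.sqrt 2)/Real.sqrt u by ring]
  exact (div_le_div_iff_of_pos_right hsu).mpr (by nlinarith)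

end
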